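/- The maps (a,b) ↦ (2/(a+b), 2(a-b)/(a+b)) and (x,y) ↦ ((y+2)/(2x), -(y-2)/(2x)) are mutually inverse bijections between rational points (a,b) on a^3 + a^2b + ab^2 + b^3 = 1 and rational points (x,y) with x ≠ 0 on y^2 = x^3 - 4. -/

import Mathlib

theorem stmt_7 :
    (∀ a b : ℚ, a^3 + a^2*b + a*b^2 + b^3 = 1 →
      (2/(a+b)) ≠ 0 ∧
      (2*(a-b)/(a+b))^2 = (2/(a+b))^3 - 4 ∧
      ((2*(a-b)/(a+b)) + 2)/(2*(2/(a+b))) = a ∧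
      -((2*(a-b)/(a+b)) - 2)/(2*(2/(a+b))) = b) ∧
    (∀ x y : ℚ, x ≠ 0 → y^2 = x^3 - 4 →
      ((y+2)/(2*x))^3 + ((y+2)/(2*x))^2 * (-(y-2)/(2*x))
        + ((y+2)/(2*x)) * (-(y-2)/(2*x))^2 + (-(y-2)/(2*x))^3 = 1 ∧
      2/((y+2)/(2*x) + (-(y-2)/(2*x))) = x ∧
      2*((y+2)/(2*x) - (-(y-2)/(2*x)))/((y+2)/(2*x) + (-(y-2)/(2*x))) = y) := by
  constructor
  · intro a b h
    have hab : a + b ≠ 0 := by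
      intro h0
      have hb : b = -a := by linarith
      rw [hb] at h
      nlinarith [h]
    refine ⟨by positivity, ?_, ?_, ?_⟩
    · field_simp
      nlinarith [h, sq_nonneg (a+b), sq_nonneg (a-b)]
    · field_simp
      ring
    · field_simp
      ring
  · intro x y hx h
    have hs : (y+2)/(2*x) + (-(y-2)/(2*x)) = 2/x := by
      field_simp; ring
    refine ⟨?_, ?_, ?_⟩
    · field_simp
      linear_combination 8 * h
    · rw [hs]; field_simp
    · rw [hs]
      have : (y+2)/(2*x) - (-(y-2)/(2*x)) = y/x := by field_simp; ring
      rw [this]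
      field_simp
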